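/- Let k, l, s, n be integers with 1 ≤ k ≤ s, 1 ≤ l ≤ s, s ≤ n and s ≥ 2l. Then ∑_{j=0}^{k−1} (−1)^{k+j+1} · C(n+2k−s−1, k−j−1) · C(n−s+j, n−s) · C(s−j−1, 2l−1) = (−1)^{k+1} · ∑_{i=0}^{min(k−1, 2l−1)} C(n−s+i, n−s) · C(2k−2−i, k−1) · C(s−1−i, 2l−1−i). -/

import Mathlib

open Finset

/-- Convolution identity: `∑_{r=0}^{N} C(a+r,r) C(b+(N−r),N−r) = C(a+b+N+1,N)`. -/
private lemma hockey_conv (a : ℕ) : ∀ N b : ℕ,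
    ∑ r ∈ range (N + 1), (a + r).choose r * (b + (N - r)).choose (N - r)
      = (a + b + N + 1).choose N := by
  intro N
  induction N with
  | zero => intro b; simp
  | succ N ihN =>
    intro b
    induction b with
    | zero =>
      have h1 : ∀ r ∈ range (N + 2),
          (a + r).choose r * (0 + (N + 1 - r)).choose (N + 1 - r) = (r + a).choose a := by
        intro r _
        rw [zero_add, Nat.choose_self, mul_one, Nat.add_comm a r, Nat.choose_symm_add]
      rw [Finset.sum_congr rfl h1, Nat.sum_range_add_choose (N + 1) a,
        show N + 1 + a + 1 = (a + 1) + (N + 1) by omega,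
        Nat.choose_symm_add, show (a + 1) + (N + 1) = a + 0 + (N + 1) + 1 by omega]
    | succ b ihb =>
      have key : ∀ r ∈ range (N + 1),
          (a + r).choose r * ((b + 1) + (N + 1 - r)).choose (N + 1 - r)
            = (a + r).choose r * ((b + 1) + (N - r)).choose (N - r)
              + (a + r).choose r * (b + (N + 1 - r)).choose (N + 1 - r) := by
        intro r hr
        have hrN : r ≤ N := by simpa [Nat.lt_succ_iff] using hr
        rw [show (b + 1) + (N + 1 - r) = (b + 1 + (N - r)) + 1 by omega,
          show N + 1 - r = (N - r) + 1 by omega,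
          Nat.choose_succ_succ' (b + 1 + (N - r)) (N - r), Nat.mul_add,
          show b + (N - r + 1) = b + 1 + (N - r) by omega]
      rw [Finset.sum_range_succ, Finset.sum_congr rfl key, Finset.sum_add_distrib]
      have ihb' := ihb
      rw [Finset.sum_range_succ] at ihb'
      simp only [Nat.sub_self, Nat.add_zero, Nat.choose_zero_right, Nat.mul_one] at ihb' ⊢
      rw [Nat.add_assoc, ihb', ihN (b + 1),
        show a + b + (N + 1) + 1 = a + (b + 1) + N + 1 by omega,
        show a + (b + 1) + (N + 1) + 1 = (a + (b + 1) + N + 1) + 1 by omega,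
        Nat.choose_succ_succ' (a + (b + 1) + N + 1) N]

/-- Finite difference: `∑_{j=0}^{i} (−1)^j C(i,j) C(d+(i−j),r) = C(d,r−i)` if `i ≤ r`, else `0`. -/
private lemma finite_diff : ∀ i d r : ℕ,
    ∑ j ∈ range (i + 1), (-1 : ℤ) ^ j * (i.choose j : ℤ) * ((d + (i - j)).choose r : ℤ)
      = if i ≤ r then ((d.choose (r - i) : ℕ) : ℤ) else 0 := by
  intro i
  induction i with
  | zero => intro d r; simp
  | succ i ih =>
    intro d r
    set g : ℕ → ℤ := fun j =>
      (-1 : ℤ) ^ j * (i.choose j : ℤ) * (((d + 1 + (i - j)).choose r : ℕ) : ℤ) with hg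
    have key : ∀ j ∈ range (i + 1),
        (-1 : ℤ) ^ (j + 1) * (((i + 1).choose (j + 1) : ℕ) : ℤ)
            * (((d + (i + 1 - (j + 1))).choose r : ℕ) : ℤ)
          = g (j + 1)
            - (-1 : ℤ) ^ j * ((i.choose j : ℕ) : ℤ) * (((d + (i - j)).choose r : ℕ) : ℤ) := by
      intro j hj
      have hji : j ≤ i := by simpa [Nat.lt_succ_iff] using hj
      simp only [hg]
      rcases Nat.lt_or_ge j i with h | h
      · rw [show d + 1 + (i - (j + 1)) = d + (i + 1 - (j + 1)) by omega,
          show i + 1 - (j + 1) = i - j by omega, Nat.choose_succ_succ i j]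
        push_cast
        ring
      · have hij : i = j := by omega
        subst hij
        rw [Nat.choose_succ_self, Nat.choose_self, show i + 1 - (i + 1) = 0 by omega,
          show i - i = 0 by omega]
        push_cast [Nat.choose_self]
        ring
    have hA : (∑ j ∈ range (i + 1), g (j + 1)) + g 0
        = if i ≤ r then (((d + 1).choose (r - i) : ℕ) : ℤ) else 0 := by
      rw [← Finset.sum_range_succ', Finset.sum_range_succ]
      have hz : g (i + 1) = 0 := by simp [hg, Nat.choose_succ_self]
      rw [hz, add_zero]
      exact ih (d + 1) r
    have hfinal : (if i ≤ r then (((d + 1).choose (r - i) : ℕ) : ℤ) else 0)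
        - (if i ≤ r then ((d.choose (r - i) : ℕ) : ℤ) else 0)
        = if i + 1 ≤ r then ((d.choose (r - (i + 1)) : ℕ) : ℤ) else 0 := by
      rcases Nat.lt_or_ge r (i + 1) with h | h
      · rcases Nat.lt_or_ge r i with h2 | h2
        · rw [if_neg (by omega), if_neg (by omega), if_neg (by omega)]; ring
        · have hir : i = r := by omega
          subst hir
          rw [if_pos le_rfl, if_pos le_rfl, if_neg (by omega), Nat.sub_self]
          simp
      · have hc : (d + 1).choose (r - i) = d.choose (r - (i + 1)) + d.choose (r - i) := by
          rw [show r - i = (r - (i + 1)) + 1 by omega]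
          exact Nat.choose_succ_succ' d (r - (i + 1))
        rw [if_pos (by omega), if_pos (by omega), if_pos h, hc]
        push_cast
        ring
    rw [Finset.sum_range_succ', Finset.sum_congr rfl key, Finset.sum_sub_distrib, ih d r]
    have hf0 : (-1 : ℤ) ^ 0 * (((i + 1).choose 0 : ℕ) : ℤ)
        * (((d + (i + 1 - 0)).choose r : ℕ) : ℤ) = g 0 := by
      rw [show d + (i + 1 - 0) = d + 1 + (i - 0) by omega]
      simp [hg]
    rw [hf0, sub_add_eq_add_sub, hA, hfinal]

/-- Trinomial-revision / convolution expansion. -/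
private lemma lemB (m K t : ℕ) (ht : t ≤ K) :
    ∑ i ∈ range (K + 1), (m + i).choose m * ((K + K - i).choose K) * i.choose t
      = (m + (K + K) + 1).choose (K - t) * (m + t).choose m := by
  rw [show K + 1 = t + (K - t + 1) by omega, Finset.sum_range_add]
  have h1 : ∑ i ∈ range t, (m + i).choose m * ((K + K - i).choose K) * i.choose t = 0 := by
    apply Finset.sum_eq_zero
    intro i hi
    rw [Nat.choose_eq_zero_of_lt (Finset.mem_range.mp hi), Nat.mul_zero]
  rw [h1, Nat.zero_add]
  have h2 : ∀ r ∈ range (K - t + 1),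
      (m + (t + r)).choose m * ((K + K - (t + r)).choose K) * (t + r).choose t
        = ((m + t) + r).choose r * ((K + ((K - t) - r)).choose ((K - t) - r))
            * (m + t).choose m := by
    intro r hr
    have hrN : r ≤ K - t := by simpa [Nat.lt_succ_iff] using hr
    have e1 : (m + (t + r)).choose m * (t + r).choose t
        = ((m + t) + r).choose r * (m + t).choose m := by
      have hcm := Nat.choose_mul (n := m + (t + r)) (k := m + t) (s := m)
        (by omega)
      rw [show m + (t + r) - m = t + r by omega, show m + t - m = t by omega] at hcm
      rw [← hcm, show m + (t + r) = (m + t) + r by omega]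
      rw [Nat.choose_symm_add, Nat.mul_comm]
    have e2 : (K + K - (t + r)).choose K = (K + ((K - t) - r)).choose ((K - t) - r) := by
      rw [show K + K - (t + r) = K + ((K - t) - r) by omega, Nat.choose_symm_add]
    calc (m + (t + r)).choose m * ((K + K - (t + r)).choose K) * (t + r).choose t
        = ((m + (t + r)).choose m * (t + r).choose t) * ((K + K - (t + r)).choose K) := by ring
      _ = (((m + t) + r).choose r * (m + t).choose m)
            * ((K + ((K - t) - r)).choose ((K - t) - r)) := by rw [e1, e2]
      _ = ((m + t) + r).choose r * ((K + ((K - t) - r)).choose ((K - t) - r))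
            * (m + t).choose m := by ring
  rw [Finset.sum_congr rfl h2, ← Finset.sum_mul, hockey_conv (m + t) (K - t) K,
    show (m + t) + K + (K - t) + 1 = m + (K + K) + 1 by omega]

/-- Non-alternating form of the sum `C_{k,l}` (case `s ≥ 2l`):
`∑_{j=0}^{k−1} (−1)^{k+j+1} C(n+2k−s−1,k−j−1) C(n−s+j,n−s) C(s−j−1,2l−1)
  = (−1)^{k+1} ∑_{i=0}^{min(k−1,2l−1)} C(n−s+i,n−s) C(2k−2−i,k−1) C(s−1−i,2l−1−i)`. -/
theorem Ckl_nonalternating (k l s n : ℕ)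
    (hk1 : 1 ≤ k) (hks : k ≤ s) (hl1 : 1 ≤ l) (hls : l ≤ s)
    (hsn : s ≤ n) (hs2l : 2 * l ≤ s) :
    ∑ j ∈ Finset.range k,
      (-1 : ℤ) ^ (k + j + 1) * (Nat.choose (n + 2 * k - s - 1) (k - j - 1) : ℤ) *
        (Nat.choose (n - s + j) (n - s) : ℤ) * (Nat.choose (s - j - 1) (2 * l - 1) : ℤ)
      = (-1 : ℤ) ^ (k + 1) *
          ∑ i ∈ Finset.range (min (k - 1) (2 * l - 1) + 1),
            (Nat.choose (n - s + i) (n - s) : ℤ) * (Nat.choose (2 * k - 2 - i) (k - 1) : ℤ) *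
              (Nat.choose (s - 1 - i) (2 * l - 1 - i) : ℤ) := by
  obtain ⟨K, rfl⟩ : ∃ K, k = K + 1 := ⟨k - 1, by omega⟩
  set m := n - s with hmdef
  set R := 2 * l - 1 with hRdef
  have hL : ∀ j ∈ range (K + 1),
      (-1 : ℤ) ^ (K + 1 + j + 1) * ((n + 2 * (K + 1) - s - 1).choose (K + 1 - j - 1) : ℤ) *
          ((m + j).choose m : ℤ) * ((s - j - 1).choose R : ℤ)
        = (-1 : ℤ) ^ (K + 2) * ((-1 : ℤ) ^ j *
            (((m + (K + K) + 1).choose (K - j) * (m + j).choose m : ℕ) : ℤ) *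
            ((s - 1 - j).choose R : ℤ)) := by
    intro j hj
    rw [show n + 2 * (K + 1) - s - 1 = m + (K + K) + 1 by omega,
      show K + 1 - j - 1 = K - j by omega, show s - j - 1 = s - 1 - j by omega,
      show K + 1 + j + 1 = (K + 2) + j by omega, pow_add]
    push_cast
    ring
  rw [Finset.sum_congr rfl hL, ← Finset.mul_sum, show K + 1 + 1 = K + 2 by omega]
  congr 1
  have h22 : ∀ i : ℕ, 2 * (K + 1) - 2 - i = K + K - i := fun i => by omega
  rw [show K + 1 - 1 = K by omega]
  simp only [h22]
  have hB : ∀ j ∈ range (K + 1),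
      (-1 : ℤ) ^ j * (((m + (K + K) + 1).choose (K - j) * (m + j).choose m : ℕ) : ℤ) *
          ((s - 1 - j).choose R : ℤ)
        = ∑ i ∈ range (K + 1), ((m + i).choose m : ℤ) * (((K + K - i).choose K) : ℤ) *
            ((-1 : ℤ) ^ j * ((i.choose j : ℕ) : ℤ) * (((s - 1 - j).choose R : ℕ) : ℤ)) := by
    intro j hj
    have hjK : j ≤ K := by simpa [Nat.lt_succ_iff] using hj
    rw [← lemB m K j hjK]
    push_cast
    rw [Finset.mul_sum, Finset.sum_mul]
    exact Finset.sum_congr rfl fun i _ => by ring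
  rw [Finset.sum_congr rfl hB, Finset.sum_comm]
  have hW : ∀ i ∈ range (K + 1),
      ∑ j ∈ range (K + 1),
          (-1 : ℤ) ^ j * ((i.choose j : ℕ) : ℤ) * (((s - 1 - j).choose R : ℕ) : ℤ)
        = if i ≤ R then (((s - 1 - i).choose (R - i) : ℕ) : ℤ) else 0 := by
    intro i hi
    have hiK : i ≤ K := by simpa [Nat.lt_succ_iff] using hi
    have hsub : ∑ j ∈ range (K + 1),
          (-1 : ℤ) ^ j * ((i.choose j : ℕ) : ℤ) * (((s - 1 - j).choose R : ℕ) : ℤ)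
        = ∑ j ∈ range (i + 1),
          (-1 : ℤ) ^ j * ((i.choose j : ℕ) : ℤ) * (((s - 1 - j).choose R : ℕ) : ℤ) := by
      symm
      apply Finset.sum_subset (Finset.range_subset_range.mpr (by omega))
      intro j hj hnj
      have hij : i < j := by
        simp only [Finset.mem_range] at hj hnj
        omega
      rw [Nat.choose_eq_zero_of_lt hij]
      push_cast
      ring
    rw [hsub]
    have hcongr : ∀ j ∈ range (i + 1),
        (-1 : ℤ) ^ j * ((i.choose j : ℕ) : ℤ) * (((s - 1 - j).choose R : ℕ) : ℤ)
          = (-1 : ℤ) ^ j * ((i.choose j : ℕ) : ℤ)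
              * ((((s - 1 - i) + (i - j)).choose R : ℕ) : ℤ) := by
      intro j hj
      have hji : j ≤ i := by simpa [Nat.lt_succ_iff] using hj
      rw [show (s - 1 - i) + (i - j) = s - 1 - j by omega]
    rw [Finset.sum_congr rfl hcongr, finite_diff i (s - 1 - i) R]
  have hS1 : ∀ i ∈ range (K + 1),
      (∑ j ∈ range (K + 1), ((m + i).choose m : ℤ) * (((K + K - i).choose K) : ℤ) *
          ((-1 : ℤ) ^ j * ((i.choose j : ℕ) : ℤ) * (((s - 1 - j).choose R : ℕ) : ℤ)))
        = ((m + i).choose m : ℤ) * (((K + K - i).choose K) : ℤ) *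
            (if i ≤ R then (((s - 1 - i).choose (R - i) : ℕ) : ℤ) else 0) := by
    intro i hi
    rw [← Finset.mul_sum]
    congr 1
    exact hW i hi
  rw [Finset.sum_congr rfl hS1]
  rw [← Finset.sum_subset (Finset.range_subset_range.mpr (show min K R + 1 ≤ K + 1 by omega))
    (by
      intro i hi hni
      simp only [Finset.mem_range] at hi hni
      rw [if_neg (by omega), mul_zero])]
  apply Finset.sum_congr rfl
  intro i hi
  simp only [Finset.mem_range] at hi
  rw [if_pos (by omega)]
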